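/- Suppose S is a biorder, h ∈ {i, j}, and a, b are configurations for S with f̃_h a = b. Then a is a good configuration if and only if b is a good configuration. -/

import Mathlib

/-!  Biorders and configurations (Section 4 of the paper).

A biorder is a finite set `S` with two linear orders `>_i`, `>_j` and a labelling
`Γ : S → {i, j}` (here modelled by `Bool`, with `true` standing for the label `i` and
`false` for the label `j`), such that `s >_i t` and `t >_j s` force `Γ s = j` and `Γ t = i`.

A configuration is a function `a : S → ℕ` taking values in `{0, 1, 2}`.

All signature-related notions are defined relative to a finite subset `T ⊆ S`
(the biorder restricted to `T`); the notions for the biorder `S` itself are recovered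
by taking `T = Finset.univ`. -/

attribute [local instance] Classical.propDecidable
set_option linter.unusedSectionVars false
set_option linter.unusedVariables false

namespace BiorderCrystal

structure Biorder (S : Type) where
  /-- the linear order whose strict relation is `<_i` -/
  li : LinearOrder S
  /-- the linear order whose strict relation is `<_j` -/
  lj : LinearOrder S
  /-- the labelling `Γ : S → {i, j}`; `true` means label `i`, `false` means label `j` -/
  lab : S → Bool
  /-- if `s >_i t` and `t >_j s` then `Γ s = j` and `Γ t = i` -/
  compat : ∀ s t : S, li.lt t s → lj.lt s t → lab s = false ∧ lab t = true

variable {S : Type}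

/-- `s <_i t`. -/
def Biorder.lti (B : Biorder S) (s t : S) : Prop := B.li.lt s t

/-- `s <_j t`. -/
def Biorder.ltj (B : Biorder S) (s t : S) : Prop := B.lj.lt s t

/-- The order used for the `h`-signature: `>_i` if `h = true`, `>_j` if `h = false`. -/
def Biorder.ord (B : Biorder S) (h : Bool) : LinearOrder S := if h then B.li else B.lj

/-- `s ≫ t`, i.e. `s >_i t` and `s >_j t`. -/
def Biorder.gg (B : Biorder S) (s t : S) : Prop := B.lti t s ∧ B.ltj t s

/-- `s ⋗ t`, i.e. `s >_i t` or `s >_j t`. -/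
def Biorder.gd (B : Biorder S) (s t : S) : Prop := B.lti t s ∨ B.ltj t s

/-- `▷`, the transitive closure of `⋗`, computed within the subset `T`. -/
def Biorder.triOn (B : Biorder S) (T : Finset S) : S → S → Prop :=
  Relation.TransGen (fun s t => s ∈ T ∧ t ∈ T ∧ B.gd s t)

/-- The sign `π_h(a, s) ∈ {+1, 0, -1}` contributed by `s` to the `h`-signature of `a`. -/
def sgn (B : Biorder S) (h : Bool) (a : S → ℕ) (s : S) : ℤ :=
  if (a s = 0 ∧ B.lab s = h) ∨ (a s = 1 ∧ B.lab s ≠ h) then 1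
  else if (a s = 1 ∧ B.lab s = h) ∨ (a s = 2 ∧ B.lab s ≠ h) then -1
  else 0

variable [Fintype S]

/-- Minus the partial sum of the `h`-signature of `a` (over `T`) along the positions
up to and including that of `s`: the elements of `T` which are `≥ s` in the order `ord h`. -/
noncomputable def G (B : Biorder S) (h : Bool) (T : Finset S) (a : S → ℕ) (s : S) : ℤ :=
  -(∑ t ∈ T.filter (fun t => (B.ord h).le s t), sgn B h a t)

/-- The sum of the `h`-signature of `a` (over `T`) from the position of `s` onwards:
the elements of `T` which are `≤ s` in the order `ord h`. -/
noncomputable def H (B : Biorder S) (h : Bool) (T : Finset S) (a : S → ℕ) (s : S) : ℤ :=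
  ∑ t ∈ T.filter (fun t => (B.ord h).le t s), sgn B h a t

/-- `ε_h(a)` (over `T`): the maximum of `0` and all the partial sums `G`. -/
noncomputable def epsB (B : Biorder S) (h : Bool) (T : Finset S) (a : S → ℕ) : ℤ :=
  T.fold max 0 (G B h T a)

/-- `φ_h(a)` (over `T`): the maximum of `0` and all the partial sums `H`. -/
noncomputable def phiB (B : Biorder S) (h : Bool) (T : Finset S) (a : S → ℕ) : ℤ :=
  T.fold max 0 (H B h T a)

/-- The `h`-good element of `T` for `a`:  the element in the good position of the
`h`-signature, i.e. the `ord h`-greatest element achieving `G = ε_h > 0` (or `none`). -/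
noncomputable def goodElt (B : Biorder S) (h : Bool) (T : Finset S) (a : S → ℕ) : Option S :=
  if hne : (T.filter fun s => 0 < epsB B h T a ∧ G B h T a s = epsB B h T a).Nonempty
  then some (@Finset.max' S (B.ord h) _ hne)
  else none

/-- The `h`-cogood element of `T` for `a`: the element in the cogood position of the
`h`-signature, i.e. the `ord h`-least element achieving `H = φ_h > 0` (or `none`). -/
noncomputable def cogoodElt (B : Biorder S) (h : Bool) (T : Finset S) (a : S → ℕ) : Option S :=
  if hne : (T.filter fun s => 0 < phiB B h T a ∧ H B h T a s = phiB B h T a).Nonempty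
  then some (@Finset.min' S (B.ord h) _ hne)
  else none

/-- The crystal operator `ẽ_h` (over `T`): decrease `a` by one at the `h`-good element,
or `none` (the ghost element `0`) if there is no good position. -/
noncomputable def et (B : Biorder S) (h : Bool) (T : Finset S) (a : S → ℕ) :
    Option (S → ℕ) :=
  (goodElt B h T a).map fun s => Function.update a s (a s - 1)

/-- The crystal operator `f̃_h` (over `T`): increase `a` by one at the `h`-cogood element,
or `none` (the ghost element `0`) if there is no cogood position. -/
noncomputable def ft (B : Biorder S) (h : Bool) (T : Finset S) (a : S → ℕ) :
    Option (S → ℕ) :=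
  (cogoodElt B h T a).map fun s => Function.update a s (a s + 1)

/-- `a` is a good configuration for the biorder restricted to `T`:
axioms G1, G2, G3 of the paper. -/
def IsGoodOn (B : Biorder S) (T : Finset S) (a : S → ℕ) : Prop :=
  (¬ ∃ s ∈ T, ∃ t ∈ T, B.lti t s ∧ B.ltj s t ∧ a s = 1 ∧ a t = 1) ∧
  (¬ ∃ s ∈ T, ∃ t ∈ T, B.gd s t ∧ B.triOn T t s ∧ B.lab s = B.lab t ∧ a s < a t) ∧
  (¬ ∃ q ∈ T, ∃ r ∈ T, ∃ s ∈ T, ∃ t ∈ T,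
      B.gd q r ∧ B.gg r s ∧ B.gd s t ∧ B.gg r t ∧ B.gd t q ∧ B.gg q s ∧
      a q = 2 ∧ a s = 2 ∧ a r = 0 ∧ a t = 0)

/-! ### auxiliary order API -/

section OrderAPI
variable (l : LinearOrder S)

lemma lo_lt_trans {x y z : S} (h1 : l.lt x y) (h2 : l.lt y z) : l.lt x z := by
  letI := l; exact lt_trans h1 h2
lemma lo_lt_irrefl {x : S} (h1 : l.lt x x) : False := by
  letI := l; exact lt_irrefl x h1
lemma lo_lt_asymm {x y : S} (h1 : l.lt x y) (h2 : l.lt y x) : False := by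
  letI := l; exact absurd h1 (lt_asymm h2)
lemma lo_ne_of_lt {x y : S} (h1 : l.lt x y) : x ≠ y := by
  letI := l; exact ne_of_lt h1
lemma lo_lt_total {x y : S} (h : x ≠ y) : l.lt x y ∨ l.lt y x := by
  letI := l; exact Ne.lt_or_gt h
lemma lo_le_of_lt {x y : S} (h1 : l.lt x y) : l.le x y := by
  letI := l; exact le_of_lt h1
lemma lo_le_refl (x : S) : l.le x x := by letI := l; exact le_refl x
lemma lo_le_trans {x y z : S} (h1 : l.le x y) (h2 : l.le y z) : l.le x z := by
  letI := l; exact le_trans h1 h2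
lemma lo_lt_of_le_of_lt {x y z : S} (h1 : l.le x y) (h2 : l.lt y z) : l.lt x z := by
  letI := l; exact lt_of_le_of_lt h1 h2
lemma lo_lt_of_lt_of_le {x y z : S} (h1 : l.lt x y) (h2 : l.le y z) : l.lt x z := by
  letI := l; exact lt_of_lt_of_le h1 h2
lemma lo_le_of_not_lt {x y : S} (h1 : ¬ l.lt x y) : l.le y x := by
  letI := l; exact le_of_not_gt h1
lemma lo_not_lt_of_le {x y : S} (h1 : l.le x y) : ¬ l.lt y x := by
  letI := l; exact not_lt_of_ge h1
lemma lo_lt_iff_not_le {x y : S} : l.lt x y ↔ ¬ l.le y x := by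
  letI := l; exact lt_iff_not_ge

end OrderAPI

/-! ### h-generic biorder API -/

section BioAPI
variable (B : Biorder S) (h : Bool)

lemma ord_not (s t : S) : (B.ord (!h)).lt s t ↔ (if h then B.lj else B.li).lt s t := by
  cases h <;> rfl

lemma compat' {s t : S} (hlt : (B.ord h).lt t s) (hlt' : (B.ord (!h)).lt s t) :
    B.lab s = !h ∧ B.lab t = h := by
  cases h
  · exact ⟨(B.compat t s hlt' hlt).2, (B.compat t s hlt' hlt).1⟩
  · exact ⟨(B.compat s t hlt hlt').1, (B.compat s t hlt hlt').2⟩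

lemma rule1 {s t : S} (hl : B.lab s = h) (hlt : (B.ord h).lt t s) : (B.ord (!h)).lt t s := by
  by_cases he : t = s
  · subst he; exact (lo_lt_irrefl _ hlt).elim
  rcases lo_lt_total (B.ord (!h)) he with h1 | h1
  · exact h1
  · exact absurd (compat' B h hlt h1).1 (by simp [hl])

lemma rule2 {s t : S} (hl : B.lab s = !h) (hlt : (B.ord (!h)).lt t s) : (B.ord h).lt t s := by
  by_cases he : t = s
  · subst he; exact (lo_lt_irrefl _ hlt).elim
  rcases lo_lt_total (B.ord h) he with h1 | h1
  · exact h1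
  · exact absurd (compat' B h h1 hlt).2 (by simp [hl])

lemma gd_iff {s t : S} : B.gd s t ↔ (B.ord h).lt t s ∨ (B.ord (!h)).lt t s := by
  cases h
  · exact or_comm
  · exact Iff.rfl

lemma gg_iff {s t : S} : B.gg s t ↔ (B.ord h).lt t s ∧ (B.ord (!h)).lt t s := by
  cases h
  · exact and_comm
  · exact Iff.rfl

lemma g1_orient {s t : S} (h1 : B.lti t s) (h2 : B.ltj s t) :
    ((B.ord h).lt t s ∧ (B.ord (!h)).lt s t) ∨ ((B.ord h).lt s t ∧ (B.ord (!h)).lt t s) := by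
  cases h
  · exact Or.inr ⟨h2, h1⟩
  · exact Or.inl ⟨h1, h2⟩

lemma g1_make {x y : S} (hgt : (B.ord h).lt y x) (hgt' : (B.ord (!h)).lt x y) :
    (B.lti y x ∧ B.ltj x y) ∨ (B.lti x y ∧ B.ltj y x) := by
  cases h
  · exact Or.inr ⟨hgt', hgt⟩
  · exact Or.inl ⟨hgt, hgt'⟩

end BioAPI

/-! ### sgn API -/

lemma sgn_classify (B : Biorder S) (h : Bool) (a : S → ℕ) (s : S) (ha : a s ≤ 2) :
    (a s = 0 ∧ B.lab s = h ∧ sgn B h a s = 1) ∨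
    (a s = 1 ∧ B.lab s = !h ∧ sgn B h a s = 1) ∨
    (a s = 1 ∧ B.lab s = h ∧ sgn B h a s = -1) ∨
    (a s = 2 ∧ B.lab s = !h ∧ sgn B h a s = -1) ∨
    (a s = 2 ∧ B.lab s = h ∧ sgn B h a s = 0) ∨
    (a s = 0 ∧ B.lab s = !h ∧ sgn B h a s = 0) := by
  have hv : a s = 0 ∨ a s = 1 ∨ a s = 2 := by omega
  by_cases hl : B.lab s = h
  · rcases hv with hv | hv | hv <;> simp [sgn, hv, hl]
  · have hl' : B.lab s = !h := by cases hb : B.lab s <;> cases h <;> simp_all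
    rcases hv with hv | hv | hv <;> simp [sgn, hv, hl, hl']

lemma sgn_bounds (B : Biorder S) (h : Bool) (a : S → ℕ) (s : S) :
    -1 ≤ sgn B h a s ∧ sgn B h a s ≤ 1 := by
  unfold sgn; split_ifs <;> omega

lemma sgn_mk1 (B : Biorder S) (h : Bool) (a : S → ℕ) (s : S)
    (hv : a s = 0 ∧ B.lab s = h ∨ a s = 1 ∧ B.lab s = !h) : sgn B h a s = 1 := by
  have : (a s = 0 ∧ B.lab s = h) ∨ (a s = 1 ∧ B.lab s ≠ h) := by
    rcases hv with ⟨h1, h2⟩ | ⟨h1, h2⟩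
    · exact Or.inl ⟨h1, h2⟩
    · exact Or.inr ⟨h1, by simp [h2]⟩
  simp [sgn, this]

/-! ### TransGen helpers -/

lemma crossing {R : S → S → Prop} (l : LinearOrder S) {c x z : S}
    (hp : Relation.TransGen R x z) (hx : l.lt x c) (hz : ¬ l.lt z c) :
    ∃ p q, Relation.ReflTransGen R x p ∧ R p q ∧
      Relation.ReflTransGen (fun v w => R v w ∧ ¬ l.lt v c ∧ ¬ l.lt w c) q z ∧
      l.lt p c ∧ ¬ l.lt q c := by
  revert hz
  induction hp with
  | single hxz =>
    intro hz
    exact ⟨x, _, Relation.ReflTransGen.refl, hxz, Relation.ReflTransGen.refl, hx, hz⟩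
  | @tail w z hp hstep ih =>
    intro hz
    by_cases hw : l.lt w c
    · exact ⟨w, z, hp.to_reflTransGen, hstep, Relation.ReflTransGen.refl, hw, hz⟩
    · obtain ⟨p, q, h1, h2, h3, h4, h5⟩ := ih hw
      exact ⟨p, q, h1, h2, h3.tail ⟨hstep, hw, hz⟩, h4, h5⟩

section TriAPI
variable [Fintype S] (B : Biorder S)

lemma tri_single {x y : S} (hgd : B.gd x y) : B.triOn Finset.univ x y :=
  Relation.TransGen.single ⟨Finset.mem_univ _, Finset.mem_univ _, hgd⟩

lemma tri_tail {x y z : S} (ht : B.triOn Finset.univ x y) (h2 : B.gd y z) :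
    B.triOn Finset.univ x z :=
  Relation.TransGen.tail ht ⟨Finset.mem_univ _, Finset.mem_univ _, h2⟩

lemma tri_head {x y z : S} (h1 : B.gd x y) (ht : B.triOn Finset.univ y z) :
    B.triOn Finset.univ x z :=
  Relation.TransGen.head ⟨Finset.mem_univ _, Finset.mem_univ _, h1⟩ ht

lemma tri_of_rtg {x y : S} (hne : x ≠ y)
    (ht : Relation.ReflTransGen (fun s t => s ∈ Finset.univ ∧ t ∈ Finset.univ ∧ B.gd s t) x y) :
    B.triOn Finset.univ x y := by
  rcases (Relation.reflTransGen_iff_eq_or_transGen).mp ht with he | htg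
  · exact absurd he.symm hne
  · exact htg

lemma tri_head_rtg {x y z : S} (h1 : B.gd x y)
    (ht : Relation.ReflTransGen (fun s t => s ∈ Finset.univ ∧ t ∈ Finset.univ ∧ B.gd s t) y z) :
    B.triOn Finset.univ x z :=
  Relation.TransGen.head' ⟨Finset.mem_univ _, Finset.mem_univ _, h1⟩ ht

lemma tri_tail_rtg {x y z : S}
    (ht : Relation.ReflTransGen (fun s t => s ∈ Finset.univ ∧ t ∈ Finset.univ ∧ B.gd s t) x y)
    (h1 : B.gd y z) : B.triOn Finset.univ x z :=
  Relation.TransGen.tail' ht ⟨Finset.mem_univ _, Finset.mem_univ _, h1⟩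

end TriAPI

/-! ### facts extracted from the cogood element -/

set_option linter.unusedSectionVars false

lemma lo_le_antisymm (l : LinearOrder S) {x y : S} (h1 : l.le x y) (h2 : l.le y x) : x = y := by
  letI := l; exact le_antisymm h1 h2

lemma lo_exists_max_filter (l : LinearOrder S) [Fintype S] {p : S → Prop} {dp : DecidablePred p}
    (hne : (@Finset.filter S p dp Finset.univ).Nonempty) : ∃ m, p m ∧ ∀ x, p x → l.le x m := by
  letI := l
  obtain ⟨m, hm, hmax⟩ : ∃ m ∈ @Finset.filter S p dp Finset.univ,
      ∀ x ∈ @Finset.filter S p dp Finset.univ, x ≤ m :=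
    ⟨_, Finset.max'_mem _ hne, fun x hx => Finset.le_max' _ x hx⟩
  simp only [Finset.mem_filter, Finset.mem_univ, true_and] at hm hmax
  exact ⟨m, hm, fun x hx => hmax x hx⟩

lemma lo_exists_min_filter (l : LinearOrder S) [Fintype S] {p : S → Prop} {dp : DecidablePred p}
    (hne : (@Finset.filter S p dp Finset.univ).Nonempty) : ∃ m, p m ∧ ∀ x, p x → l.le m x := by
  letI := l
  obtain ⟨m, hm, hmax⟩ : ∃ m ∈ @Finset.filter S p dp Finset.univ,
      ∀ x ∈ @Finset.filter S p dp Finset.univ, m ≤ x :=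
    ⟨_, Finset.min'_mem _ hne, fun x hx => Finset.min'_le _ x hx⟩
  simp only [Finset.mem_filter, Finset.mem_univ, true_and] at hm hmax
  exact ⟨m, hm, fun x hx => hmax x hx⟩

lemma cogood_facts (B : Biorder S) (h : Bool) (a : S → ℕ) (u : S)
    (hc : cogoodElt B h Finset.univ a = some u) :
    sgn B h a u = 1 ∧
    (∀ y, (B.ord h).lt u y → sgn B h a y = 1 →
      ∃ w, (B.ord h).lt u w ∧ (B.ord h).lt w y ∧ sgn B h a w = -1) ∧
    (∀ y, (B.ord h).lt y u → sgn B h a y = -1 →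
      ∃ w, (B.ord h).lt y w ∧ (B.ord h).lt w u ∧ sgn B h a w = 1) := by
  by_cases hne : (Finset.univ.filter fun s =>
      0 < phiB B h Finset.univ a ∧ H B h Finset.univ a s = phiB B h Finset.univ a).Nonempty
  swap
  · rw [cogoodElt, dif_neg hne] at hc; exact absurd hc (by simp)
  rw [cogoodElt, dif_pos hne] at hc
  have hu : @Finset.min' S (B.ord h) _ hne = u := Option.some.inj hc
  have humem := hu ▸ @Finset.min'_mem S (B.ord h) _ hne
  rw [Finset.mem_filter] at humem
  obtain ⟨-, hφpos, hHu⟩ := humem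
  have hHdef : ∀ t, H B h Finset.univ a t =
      ∑ v ∈ Finset.univ.filter (fun v => (B.ord h).le v t), sgn B h a v := fun t => rfl
  have M2 : ∀ t : S, H B h Finset.univ a t ≤ H B h Finset.univ a u := by
    intro t
    rw [hHu]
    exact (Finset.le_fold_max (H B h Finset.univ a t)).mpr (Or.inr ⟨t, Finset.mem_univ t, le_refl _⟩)
  have M3 : ∀ t : S, (B.ord h).lt t u → H B h Finset.univ a t ≤ H B h Finset.univ a u - 1 := by
    intro t hlt
    rcases lt_or_eq_of_le (M2 t) with hl | he
    · omega
    · exfalso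
      have hmem : t ∈ Finset.univ.filter fun s =>
          0 < phiB B h Finset.univ a ∧ H B h Finset.univ a s = phiB B h Finset.univ a := by
        rw [Finset.mem_filter]
        exact ⟨Finset.mem_univ _, hφpos, he.trans hHu⟩
      have := hu ▸ @Finset.min'_le S (B.ord h) _ t hmem
      exact lo_not_lt_of_le (B.ord h) this hlt
  have M1 : 1 ≤ H B h Finset.univ a u := by rw [hHu]; omega
  have LemA : ∀ x y : S, (B.ord h).lt x y → H B h Finset.univ a y = H B h Finset.univ a x +
      ∑ v ∈ Finset.univ.filter (fun v => (B.ord h).lt x v ∧ (B.ord h).le v y), sgn B h a v := by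
    intro x y hxy
    rw [hHdef, hHdef]
    have hsplit := Finset.sum_filter_add_sum_filter_not
      (Finset.univ.filter (fun v => (B.ord h).le v y)) (fun v => (B.ord h).le v x) (sgn B h a)
    rw [Finset.filter_filter, Finset.filter_filter] at hsplit
    have e1 : Finset.univ.filter (fun v => (B.ord h).le v y ∧ (B.ord h).le v x) =
        Finset.univ.filter (fun v => (B.ord h).le v x) := by
      apply Finset.filter_congr
      intro v _
      exact ⟨fun hv => hv.2, fun hv => ⟨lo_le_trans _ hv (lo_le_of_lt _ hxy), hv⟩⟩
    have e2 : Finset.univ.filter (fun v => (B.ord h).le v y ∧ ¬ (B.ord h).le v x) =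
        Finset.univ.filter (fun v => (B.ord h).lt x v ∧ (B.ord h).le v y) := by
      apply Finset.filter_congr
      intro v _
      constructor
      · exact fun hv => ⟨(lo_lt_iff_not_le _).mpr hv.2, hv.1⟩
      · exact fun hv => ⟨hv.2, (lo_lt_iff_not_le _).mp hv.1⟩
    rw [e1, e2] at hsplit
    omega
  have LemB : ∀ x y : S, (B.ord h).lt x y →
      ∑ v ∈ Finset.univ.filter (fun v => (B.ord h).lt x v ∧ (B.ord h).le v y), sgn B h a v =
      (∑ v ∈ Finset.univ.filter (fun v => (B.ord h).lt x v ∧ (B.ord h).lt v y), sgn B h a v)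
        + sgn B h a y := by
    intro x y hxy
    have hsplit := Finset.sum_filter_add_sum_filter_not
      (Finset.univ.filter (fun v => (B.ord h).lt x v ∧ (B.ord h).le v y))
      (fun v => (B.ord h).lt v y) (sgn B h a)
    rw [Finset.filter_filter, Finset.filter_filter] at hsplit
    have e1 : Finset.univ.filter (fun v => ((B.ord h).lt x v ∧ (B.ord h).le v y) ∧ (B.ord h).lt v y) =
        Finset.univ.filter (fun v => (B.ord h).lt x v ∧ (B.ord h).lt v y) := by
      apply Finset.filter_congr
      intro v _
      exact ⟨fun hv => ⟨hv.1.1, hv.2⟩, fun hv => ⟨⟨hv.1, lo_le_of_lt _ hv.2⟩, hv.2⟩⟩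
    have e2 : Finset.univ.filter
        (fun v => ((B.ord h).lt x v ∧ (B.ord h).le v y) ∧ ¬ (B.ord h).lt v y) = {y} := by
      apply Finset.eq_singleton_iff_unique_mem.mpr
      constructor
      · rw [Finset.mem_filter]
        exact ⟨Finset.mem_univ _, ⟨hxy, lo_le_refl _ y⟩, fun hv => lo_lt_irrefl _ hv⟩
      · intro v hv
        rw [Finset.mem_filter] at hv
        exact lo_le_antisymm _ hv.2.1.2 (lo_le_of_not_lt _ hv.2.2)
    rw [e1, e2, Finset.sum_singleton] at hsplit
    omega
  have LemC : ∀ y : S, H B h Finset.univ a y =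
      (∑ v ∈ Finset.univ.filter (fun v => (B.ord h).lt v y), sgn B h a v) + sgn B h a y := by
    intro y
    rw [hHdef]
    have hsplit := Finset.sum_filter_add_sum_filter_not
      (Finset.univ.filter (fun v => (B.ord h).le v y)) (fun v => (B.ord h).lt v y) (sgn B h a)
    rw [Finset.filter_filter, Finset.filter_filter] at hsplit
    have e1 : Finset.univ.filter (fun v => (B.ord h).le v y ∧ (B.ord h).lt v y) =
        Finset.univ.filter (fun v => (B.ord h).lt v y) := by
      apply Finset.filter_congr
      intro v _
      exact ⟨fun hv => hv.2, fun hv => ⟨lo_le_of_lt _ hv, hv⟩⟩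
    have e2 : Finset.univ.filter (fun v => (B.ord h).le v y ∧ ¬ (B.ord h).lt v y) = {y} := by
      apply Finset.eq_singleton_iff_unique_mem.mpr
      constructor
      · rw [Finset.mem_filter]
        exact ⟨Finset.mem_univ _, lo_le_refl _ y, fun hv => lo_lt_irrefl _ hv⟩
      · intro v hv
        rw [Finset.mem_filter] at hv
        exact lo_le_antisymm _ hv.2.1 (lo_le_of_not_lt _ hv.2.2)
    rw [e1, e2, Finset.sum_singleton] at hsplit
    omega
  have LemP : ∀ y : S, (B.ord h).le y u →
      (∑ v ∈ Finset.univ.filter (fun v => (B.ord h).lt v y), sgn B h a v)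
        ≤ H B h Finset.univ a u - 1 := by
    intro y hy
    rcases Classical.em ((Finset.univ.filter (fun v => (B.ord h).lt v y)).Nonempty) with hne2 | hne2
    · obtain ⟨t₀, ht₀, ht₀max⟩ := lo_exists_max_filter (B.ord h) hne2
      have he : Finset.univ.filter (fun v => (B.ord h).lt v y) =
          Finset.univ.filter (fun v => (B.ord h).le v t₀) := by
        apply Finset.filter_congr
        intro v _
        constructor
        · intro hv
          exact ht₀max v hv
        · intro hv
          exact lo_lt_of_le_of_lt _ hv ht₀
      rw [he, ← hHdef]
      exact M3 _ (lo_lt_of_lt_of_le _ ht₀ hy)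
    · rw [Finset.not_nonempty_iff_eq_empty] at hne2
      rw [hne2, Finset.sum_empty]
      omega
  have h0 : sgn B h a u = 1 := by
    have hC := LemC u
    have hb := sgn_bounds B h a u
    have hP := LemP u (lo_le_refl _ u)
    omega
  refine ⟨h0, ?_, ?_⟩
  · intro y huy hy1
    have hA := LemA u y huy
    have hB := LemB u y huy
    have hM := M2 y
    have hsum : ∑ v ∈ Finset.univ.filter
        (fun v => (B.ord h).lt u v ∧ (B.ord h).lt v y), sgn B h a v < 0 := by omega
    obtain ⟨w, hwmem, hw⟩ : ∃ w ∈ Finset.univ.filter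
        (fun v => (B.ord h).lt u v ∧ (B.ord h).lt v y), sgn B h a w < 0 := by
      by_contra hcon
      push_neg at hcon
      exact absurd (Finset.sum_nonneg fun i hi => hcon i hi) (not_le_of_gt hsum)
    rw [Finset.mem_filter] at hwmem
    have hb := sgn_bounds B h a w
    exact ⟨w, hwmem.2.1, hwmem.2.2, by omega⟩
  · intro y hyu hy1
    by_contra hcon
    push_neg at hcon
    have hsum : ∑ v ∈ Finset.univ.filter
        (fun v => (B.ord h).lt y v ∧ (B.ord h).lt v u), sgn B h a v ≤ 0 := by
      apply Finset.sum_nonpos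
      intro w hw
      rw [Finset.mem_filter] at hw
      have hb := sgn_bounds B h a w
      have := hcon w hw.2.1 hw.2.2
      omega
    have hA := LemA y u hyu
    have hB := LemB y u hyu
    have hC := LemC y
    have hP := LemP y (lo_le_of_lt _ hyu)
    omega


/-! ### small helpers -/

lemma bool_ne_not (c : Bool) : c ≠ !c := by cases c <;> simp

lemma bool_eq_not {c d : Bool} (hne : c ≠ d) : c = !d := by
  cases c <;> cases d <;> simp_all

lemma bool_not_eq_not {c d : Bool} (hne : ¬ c = !d) : c = d := by
  cases c <;> cases d <;> simp_all

lemma gd_ne {B : Biorder S} {x y : S} (hgd : B.gd x y) : x ≠ y := by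
  rintro rfl
  rcases hgd with hc | hc
  · exact lo_lt_irrefl B.li hc
  · exact lo_lt_irrefl B.lj hc

lemma gd_of_gg {B : Biorder S} {x y : S} (hgg : B.gg x y) : B.gd x y := Or.inl hgg.1

lemma gd_total (B : Biorder S) (h : Bool) {x y : S} (hne : x ≠ y) (hngd : ¬ B.gd x y) :
    (B.ord h).lt x y ∧ (B.ord (!h)).lt x y := by
  rw [gd_iff B h] at hngd
  push_neg at hngd
  constructor
  · rcases lo_lt_total (B.ord h) hne with hc | hc
    · exact hc
    · exact absurd hc (lo_not_lt_of_le _ hngd.1)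
  · rcases lo_lt_total (B.ord (!h)) hne with hc | hc
    · exact hc
    · exact absurd hc (lo_not_lt_of_le _ hngd.2)

/-! ### the main forward lemma -/

lemma main_lemma (B : Biorder S) (h : Bool) (a : S → ℕ) (u : S)
    (ha : ∀ s, a s ≤ 2) (h0 : sgn B h a u = 1)
    (hdip : ∀ y, (B.ord h).lt u y → sgn B h a y = 1 →
      ∃ w, (B.ord h).lt u w ∧ (B.ord h).lt w y ∧ sgn B h a w = -1)
    (hg : IsGoodOn B Finset.univ a) :
    IsGoodOn B Finset.univ (Function.update a u (a u + 1)) := by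
  obtain ⟨g1, g2, g3⟩ := hg
  have noG1 : ∀ x y : S, (B.ord h).lt y x → (B.ord (!h)).lt x y →
      a x = 1 → a y = 1 → False := by
    intro x y hxy hyx hax hay
    apply g1
    rcases g1_make B h hxy hyx with hc | hc
    · exact ⟨x, Finset.mem_univ _, y, Finset.mem_univ _, hc.1, hc.2, hax, hay⟩
    · exact ⟨y, Finset.mem_univ _, x, Finset.mem_univ _, hc.1, hc.2, hay, hax⟩
  have noG2 : ∀ x y : S, B.gd x y → B.triOn Finset.univ y x → B.lab x = B.lab y →
      a x < a y → False := by
    intro x y h1 h2 h3 h4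
    exact g2 ⟨x, Finset.mem_univ _, y, Finset.mem_univ _, h1, h2, h3, h4⟩
  have noG3 : ∀ q r s t : S, B.gd q r → B.gg r s → B.gd s t → B.gg r t → B.gd t q →
      B.gg q s → a q = 2 → a s = 2 → a r = 0 → a t = 0 → False := by
    intro q r s t h1 h2 h3 h4 h5 h6 h7 h8 h9 h10
    exact g3 ⟨q, Finset.mem_univ _, r, Finset.mem_univ _, s, Finset.mem_univ _,
      t, Finset.mem_univ _, h1, h2, h3, h4, h5, h6, h7, h8, h9, h10⟩
  have hK : (a u = 0 ∧ B.lab u = h) ∨ (a u = 1 ∧ B.lab u = !h) := by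
    rcases sgn_classify B h a u (ha u) with hc | hc | hc | hc | hc | hc
    · exact Or.inl ⟨hc.1, hc.2.1⟩
    · exact Or.inr ⟨hc.1, hc.2.1⟩
    all_goals (exfalso; omega)
  have hbu : Function.update a u (a u + 1) u = a u + 1 := Function.update_self u _ a
  have hbo : ∀ x : S, x ≠ u → Function.update a u (a u + 1) x = a x :=
    fun x hx => Function.update_of_ne hx _ a
  -- the hard core used for G2 with t = u
  have bigcase : ∀ s : S, B.gd s u → B.triOn Finset.univ u s → B.lab s = B.lab u →
      a s = a u → False := by
    intro s hgds htris hlabs heqs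
    have hFne : (Finset.univ.filter (fun v => B.gd v u ∧ B.triOn Finset.univ u v ∧
        B.lab v = B.lab u ∧ a v = a u)).Nonempty :=
      ⟨s, Finset.mem_filter.mpr ⟨Finset.mem_univ _, hgds, htris, hlabs, heqs⟩⟩
    obtain ⟨s₀, ⟨hgd₀, htri₀, hlab₀, heq₀⟩, hmin⟩ := lo_exists_min_filter (B.ord h) hFne
    clear hgds htris hlabs heqs hFne
    have hsnu : s₀ ≠ u := gd_ne hgd₀
    rcases hK with ⟨hau, hlu⟩ | ⟨hau, hlu⟩
    · -- Case 2 : a u = 0, lab u = h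
      have hls : B.lab s₀ = h := hlab₀.trans hlu
      have hlt_us : (B.ord h).lt u s₀ := by
        rcases (gd_iff B h).mp hgd₀ with hc | hc
        · exact hc
        · rcases lo_lt_total (B.ord h) hsnu with hc2 | hc2
          · exact absurd (compat' B h hc2 hc).1 (by rw [hlu]; exact bool_ne_not h)
          · exact hc2
      have hlt'_us : (B.ord (!h)).lt u s₀ := rule1 B h hls hlt_us
      have hF2 : ∀ v, (B.ord h).lt u v → (B.ord h).lt v s₀ → B.lab v = h → a v = 0 := by
        intro v h1 h2 hlv
        by_contra hav
        exact noG2 s₀ v ((gd_iff B h).mpr (Or.inl h2))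
          (tri_head B ((gd_iff B h).mpr (Or.inl h1)) htri₀)
          (hls.trans hlv.symm) (by omega)
      have hsg : sgn B h a s₀ = 1 := sgn_mk1 B h a s₀ (Or.inl ⟨by omega, hls⟩)
      obtain ⟨w, hw1, hw2, hsw⟩ := hdip s₀ hlt_us hsg
      have hwdat : a w = 2 ∧ B.lab w = !h := by
        rcases sgn_classify B h a w (ha w) with hc | hc | hc | hc | hc | hc
        · omega
        · omega
        · exact absurd (hF2 w hw1 hw2 hc.2.1) (by omega)
        · exact ⟨hc.1, hc.2.1⟩
        · omega
        · omega
      obtain ⟨haw, hlw⟩ := hwdat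
      have hlt'_ws : (B.ord (!h)).lt w s₀ := by
        rcases lo_lt_total (B.ord (!h)) (lo_ne_of_lt (B.ord h) hw2) with hc | hc
        · exact hc
        · exact absurd (rule2 B h hlw hc) (fun hh => lo_lt_asymm (B.ord h) hw2 hh)
      obtain ⟨x, y, hux, hxy, hys, hxlts, hynlts⟩ :=
        crossing (B.ord h) htri₀ hlt_us (fun hh => lo_lt_irrefl (B.ord h) hh)
      have hgdxy : B.gd x y := hxy.2.2
      have hlt_xy : (B.ord h).lt x y :=
        lo_lt_of_lt_of_le (B.ord h) hxlts (lo_le_of_not_lt (B.ord h) hynlts)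
      have hlt'_yx : (B.ord (!h)).lt y x := by
        rcases (gd_iff B h).mp hgdxy with hc | hc
        · exact absurd hc (fun hh => lo_lt_asymm (B.ord h) hlt_xy hh)
        · exact hc
      have hlaby : B.lab y = !h := (compat' B h hlt_xy hlt'_yx).1
      have hlabx : B.lab x = h := (compat' B h hlt_xy hlt'_yx).2
      have hyns : y ≠ s₀ := by
        intro hh
        rw [hh] at hlaby
        rw [hls] at hlaby
        exact bool_ne_not h hlaby
      have hlt_sy : (B.ord h).lt s₀ y := by
        rcases lo_lt_total (B.ord h) (Ne.symm hyns) with hc | hc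
        · exact hc
        · exact absurd hc hynlts
      have htri_ys : B.triOn Finset.univ y s₀ :=
        tri_of_rtg B hyns (by refine Relation.ReflTransGen.mono ?_ _ _ hys; intro p q hr; exact hr.1)
      have hay2 : a y = 2 := by
        by_contra hay
        refine noG2 y w ((gd_iff B h).mpr (Or.inl (lo_lt_trans (B.ord h) hw2 hlt_sy)))
          (tri_head B ((gd_iff B h).mpr (Or.inl hw1)) (tri_tail_rtg B hux hgdxy))
          (hlaby.trans hlw.symm) (by have := ha y; omega)
      -- a common finish via G3
      have hlt'_wy : (B.ord (!h)).lt w y := by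
        rcases lo_lt_total (B.ord (!h)) (lo_ne_of_lt (B.ord h)
          (lo_lt_trans (B.ord h) hw2 hlt_sy)) with hc | hc
        · exact hc
        · exact absurd (rule2 B h hlw hc)
            (fun hh => lo_lt_asymm (B.ord h) (lo_lt_trans (B.ord h) hw2 hlt_sy) hh)
      have finish : ∀ x' : S, (B.ord h).lt x' w → (B.ord (!h)).lt y x' →
          (B.ord (!h)).lt x' s₀ → a x' = 0 → (B.ord h).lt x' s₀ → False := by
        intro x' f1 f2 f3 f4 f5
        refine noG3 y s₀ w x' ((gd_iff B h).mpr (Or.inl hlt_sy))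
          ((gg_iff B h).mpr ⟨hw2, hlt'_ws⟩) ((gd_iff B h).mpr (Or.inl f1))
          ((gg_iff B h).mpr ⟨f5, f3⟩)
          ((gd_iff B h).mpr (Or.inr f2))
          ((gg_iff B h).mpr ⟨lo_lt_trans (B.ord h) hw2 hlt_sy, hlt'_wy⟩)
          hay2 haw (by omega) f4
      by_cases hxu : x = u
      · subst hxu
        exact finish x hw1 hlt'_yx hlt'_us hau hlt_us
      · rcases lo_lt_total (B.ord h) hxu with hc | hc
        · -- x below u
          have hlt_xs : (B.ord h).lt x s₀ := lo_lt_trans (B.ord h) hc hlt_us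
          have hax0 : a x = 0 := by
            by_contra hax
            exact noG2 s₀ x ((gd_iff B h).mpr (Or.inl hlt_xs))
              (tri_head B ((gd_iff B h).mpr (Or.inr hlt'_yx)) htri_ys)
              (hls.trans hlabx.symm) (by omega)
          have hlt'_xs : (B.ord (!h)).lt x s₀ := by
            rcases lo_lt_total (B.ord (!h)) (lo_ne_of_lt (B.ord h) hlt_xs) with hc2 | hc2
            · exact hc2
            · exact absurd (compat' B h hlt_xs hc2).1 (by rw [hls]; exact bool_ne_not h)
          exact finish x (lo_lt_trans (B.ord h) hc hw1) hlt'_yx hlt'_xs hax0 hlt_xs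
        · -- x above u : contradicts minimality of s₀
          have hmem : B.gd x u ∧ B.triOn Finset.univ u x ∧ B.lab x = B.lab u ∧ a x = a u := by
            refine ⟨(gd_iff B h).mpr (Or.inl hc),
              tri_of_rtg B (lo_ne_of_lt (B.ord h) hc) hux,
              hlabx.trans hlu.symm, ?_⟩
            rw [hF2 x hc hxlts hlabx, hau]
          have := hmin x hmem
          exact lo_not_lt_of_le (B.ord h) this hxlts
    · -- Case 3 : a u = 1, lab u = !h
      have hls : B.lab s₀ = !h := hlab₀.trans hlu
      have has1 : a s₀ = 1 := by omega
      have hlt_us : (B.ord h).lt u s₀ := by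
        rcases (gd_iff B h).mp hgd₀ with hc | hc
        · exact hc
        · rcases lo_lt_total (B.ord h) hsnu with hc2 | hc2
          · exact absurd (compat' B h hc2 hc).2 (by rw [hls]; exact Ne.symm (bool_ne_not h))
          · exact hc2
      have hlt'_us : (B.ord (!h)).lt u s₀ := by
        rcases lo_lt_total (B.ord (!h)) (Ne.symm hsnu) with hc | hc
        · exact hc
        · exact absurd (compat' B h hlt_us hc).2 (by rw [hlu]; exact Ne.symm (bool_ne_not h))
      have hIoo : ∀ v, (B.ord h).lt u v → (B.ord h).lt v s₀ → B.lab v = h := by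
        intro v h1 h2
        by_contra hlv'
        have hlv : B.lab v = !h := bool_eq_not hlv'
        have htuv : B.triOn Finset.univ u v := tri_tail B htri₀ ((gd_iff B h).mpr (Or.inl h2))
        have hav : a v = 0 ∨ a v = 1 ∨ a v = 2 := by have := ha v; omega
        rcases hav with hav | hav | hav
        · exact noG2 v u ((gd_iff B h).mpr (Or.inl h1)) htuv (hlv.trans hlu.symm) (by omega)
        · have hmem : B.gd v u ∧ B.triOn Finset.univ u v ∧ B.lab v = B.lab u ∧ a v = a u :=
            ⟨(gd_iff B h).mpr (Or.inl h1), htuv, hlv.trans hlu.symm, by omega⟩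
          exact lo_not_lt_of_le (B.ord h) (hmin v hmem) h2
        · exact noG2 s₀ v ((gd_iff B h).mpr (Or.inl h2))
            (tri_head B ((gd_iff B h).mpr (Or.inl h1)) htri₀) (hls.trans hlv.symm) (by omega)
      have hsg : sgn B h a s₀ = 1 := sgn_mk1 B h a s₀ (Or.inr ⟨has1, hls⟩)
      obtain ⟨w, hw1, hw2, hsw⟩ := hdip s₀ hlt_us hsg
      have hwdat : a w = 1 ∧ B.lab w = h := by
        rcases sgn_classify B h a w (ha w) with hc | hc | hc | hc | hc | hc
        · omega
        · omega
        · exact ⟨hc.1, hc.2.1⟩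
        · exact absurd (hIoo w hw1 hw2) (by rw [hc.2.1]; exact Ne.symm (bool_ne_not h))
        · omega
        · omega
      obtain ⟨haw, hlw⟩ := hwdat
      have hlt'_ws : (B.ord (!h)).lt w s₀ := by
        rcases lo_lt_total (B.ord (!h)) (lo_ne_of_lt (B.ord h) hw2) with hc | hc
        · exact hc
        · exact (noG1 s₀ w hw2 hc has1 haw).elim
      -- first step of the path goes below u
      obtain ⟨p, hup, hps⟩ := (Relation.TransGen.head'_iff).mp htri₀
      have hlt_pu : (B.ord h).lt p u := by
        rcases (gd_iff B h).mp hup.2.2 with hc | hc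
        · exact hc
        · exact rule2 B h hlu hc
      have hpns : p ≠ s₀ := lo_ne_of_lt (B.ord h) (lo_lt_trans (B.ord h) hlt_pu hlt_us)
      have htgps := tri_of_rtg B hpns hps
      obtain ⟨x, y, hpx, hxy, hys, hxltu, hynltu⟩ :=
        crossing (B.ord h) htgps hlt_pu (fun hh => lo_lt_asymm (B.ord h) hlt_us hh)
      have hynu : y ≠ u := by
        intro hh
        subst hh
        rcases Relation.ReflTransGen.cases_head hys with heq2 | ⟨c, hstep, -⟩
        · exact hsnu heq2.symm
        · have hcu : (B.ord h).lt c y := by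
            rcases (gd_iff B h).mp hstep.1.2.2 with hc | hc
            · exact hc
            · exact rule2 B h hlu hc
          exact hstep.2.2 hcu
      have hlt_uy : (B.ord h).lt u y := by
        rcases lo_lt_total (B.ord h) (Ne.symm hynu) with hc | hc
        · exact hc
        · exact absurd hc hynltu
      have hlt_xy : (B.ord h).lt x y := lo_lt_trans (B.ord h) hxltu hlt_uy
      have hlt'_yx : (B.ord (!h)).lt y x := by
        rcases (gd_iff B h).mp hxy.2.2 with hc | hc
        · exact absurd hc (fun hh => lo_lt_asymm (B.ord h) hlt_xy hh)
        · exact hc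
      have hlaby : B.lab y = !h := (compat' B h hlt_xy hlt'_yx).1
      have hlabx : B.lab x = h := (compat' B h hlt_xy hlt'_yx).2
      have hlt'_xw : (B.ord (!h)).lt x w :=
        rule1 B h hlw (lo_lt_trans (B.ord h) hxltu hw1)
      by_cases hye : y = s₀
      · subst hye
        exact lo_lt_irrefl (B.ord (!h))
          (lo_lt_trans (B.ord (!h)) (lo_lt_trans (B.ord (!h)) hlt'_ws hlt'_yx) hlt'_xw)
      · have hnlt_ys : ¬ (B.ord h).lt y s₀ := by
          intro hh
          exact absurd (hIoo y hlt_uy hh) (by rw [hlaby]; exact Ne.symm (bool_ne_not h))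
        have hlt_sy : (B.ord h).lt s₀ y := by
          rcases lo_lt_total (B.ord h) (Ne.symm hye) with hc | hc
          · exact hc
          · exact absurd hc hnlt_ys
        have htri_ys : B.triOn Finset.univ y s₀ :=
          tri_of_rtg B hye (by refine Relation.ReflTransGen.mono ?_ _ _ hys; intro pp qq hr; exact hr.1)
        have htri_uy : B.triOn Finset.univ u y :=
          tri_tail_rtg B (Relation.ReflTransGen.head hup hpx) hxy.2.2
        have hav : a y = 0 ∨ a y = 1 ∨ a y = 2 := by have := ha y; omega
        rcases hav with hay | hay | hay
        · exact noG2 y s₀ ((gd_iff B h).mpr (Or.inl hlt_sy))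
            (tri_head B ((gd_iff B h).mpr (Or.inl hlt_us)) htri_uy)
            (hlaby.trans hls.symm) (by omega)
        · exact noG1 y w (lo_lt_trans (B.ord h) hw2 hlt_sy)
            (lo_lt_trans (B.ord (!h)) hlt'_yx hlt'_xw) hay haw
        · rcases lo_lt_total (B.ord (!h)) (Ne.symm hye) with hc | hc
          · exact lo_lt_irrefl (B.ord (!h))
              (lo_lt_trans (B.ord (!h)) (lo_lt_trans (B.ord (!h))
                (lo_lt_trans (B.ord (!h)) hlt'_ws hc) hlt'_yx) hlt'_xw)
          · exact noG2 s₀ y ((gd_iff B h).mpr (Or.inr hc)) htri_ys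
              (hls.trans hlaby.symm) (by omega)
  -- now the three components
  refine ⟨?_, ?_, ?_⟩
  · -- G1 of b
    rintro ⟨s, -, t, -, h1, h2, hs1, ht1⟩
    have core : ∀ x y : S, (B.ord h).lt y x → (B.ord (!h)).lt x y →
        Function.update a u (a u + 1) x = 1 → Function.update a u (a u + 1) y = 1 → False := by
      intro x y hxy hyx hbx hby
      have hlabx : B.lab x = !h := (compat' B h hxy hyx).1
      have hlaby : B.lab y = h := (compat' B h hxy hyx).2
      by_cases hxu : x = u
      · subst hxu
        rw [hbu] at hbx
        rcases hK with ⟨hau, hlu⟩ | ⟨hau, hlu⟩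
        · exact bool_ne_not h (hlu.symm.trans hlabx)
        · omega
      · have hax : a x = 1 := by rw [← hbo x hxu]; exact hbx
        by_cases hyu : y = u
        · subst hyu
          rw [hbu] at hby
          have hau : a y = 0 := by omega
          have hsgx : sgn B h a x = 1 := sgn_mk1 B h a x (Or.inr ⟨hax, hlabx⟩)
          obtain ⟨w, hw1, hw2, hsw⟩ := hdip x hxy hsgx
          rcases sgn_classify B h a w (ha w) with hc | hc | hc | hc | hc | hc
          · omega
          · omega
          · -- w has a w = 1, lab w = h
            obtain ⟨haw, hlw, -⟩ := hc
            rcases lo_lt_total (B.ord (!h)) (lo_ne_of_lt (B.ord h) hw2) with hcw | hcw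
            · exact bool_ne_not h
                ((compat' B h hw1 (lo_lt_trans (B.ord (!h)) hcw hyx)).1.symm.trans hlw).symm
            · exact noG1 x w hw2 hcw hax haw
          · -- w has a w = 2, lab w = !h
            obtain ⟨haw, hlw, -⟩ := hc
            have hcw : (B.ord (!h)).lt w x := by
              rcases lo_lt_total (B.ord (!h)) (lo_ne_of_lt (B.ord h) hw2) with hcw | hcw
              · exact hcw
              · exact absurd (rule2 B h hlw hcw) (fun hh => lo_lt_asymm (B.ord h) hw2 hh)
            exact noG2 x w ((gd_iff B h).mpr (Or.inl hw2))
              (tri_tail B (tri_single B ((gd_iff B h).mpr (Or.inl hw1)))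
                ((gd_iff B h).mpr (Or.inr hyx)))
              (hlabx.trans hlw.symm) (by omega)
          · omega
          · omega
        · have hay : a y = 1 := by rw [← hbo y hyu]; exact hby
          exact noG1 x y hxy hyx hax hay
    rcases g1_orient B h h1 h2 with ⟨hx1, hx2⟩ | ⟨hx1, hx2⟩
    · exact core s t hx1 hx2 hs1 ht1
    · exact core t s hx1 hx2 ht1 hs1
  · -- G2 of b
    rintro ⟨s, -, t, -, hgd, htri, hlabeq, hlt⟩
    by_cases hsu : s = u
    · have htnu : t ≠ u := fun hh => gd_ne hgd (hsu.trans hh.symm)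
      have hbs : Function.update a u (a u + 1) s = a u + 1 := by rw [hsu, hbu]
      have has : a s = a u := by rw [hsu]
      rw [hbs, hbo t htnu] at hlt
      exact noG2 s t hgd htri hlabeq (by omega)
    · rw [hbo s hsu] at hlt
      by_cases htu : t = u
      · subst htu
        rw [hbu] at hlt
        have heq : a s = a t := by
          have hnlt : ¬ a s < a t := fun hh => noG2 s t hgd htri hlabeq hh
          omega
        exact bigcase s hgd htri hlabeq heq
      · rw [hbo t htu] at hlt
        exact noG2 s t hgd htri hlabeq hlt
  · -- G3 of b
    rintro ⟨q, -, r, -, s, -, t, -, hqr, hrs, hst, hrt, htq, hqs, hbq, hbs, hbr, hbt⟩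
    have hrnu : r ≠ u := by
      intro hh
      subst hh
      rw [hbu] at hbr
      omega
    have htnu : t ≠ u := by
      intro hh
      subst hh
      rw [hbu] at hbt
      omega
    rw [hbo r hrnu] at hbr
    rw [hbo t htnu] at hbt
    by_cases hqu : q = u
    · -- Case 4
      subst hqu
      rw [hbu] at hbq
      have hau : a q = 1 := by omega
      have hlu : B.lab q = !h := by
        rcases hK with ⟨hau2, hlu2⟩ | ⟨hau2, hlu2⟩
        · omega
        · exact hlu2
      have hsnu : s ≠ q := by
        intro hh
        subst hh
        exact lo_lt_irrefl (B.ord h) ((gg_iff B h).mp hqs).1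
      rw [hbo s hsnu] at hbs
      have hlabt : B.lab t = h := by
        by_contra hca
        exact noG2 t q htq
          (tri_tail B (tri_tail B (tri_single B hqr) (gd_of_gg hrs)) hst)
          ((bool_eq_not hca).trans hlu.symm) (by omega)
      have hlabs : B.lab s = h := by
        by_contra hca
        exact noG2 q s (gd_of_gg hqs) (tri_tail B (tri_single B hst) htq)
          (hlu.trans (bool_eq_not hca).symm) (by omega)
      have hlabr : B.lab r = !h := by
        by_contra hca
        have : B.lab r = h := bool_not_eq_not hca
        exact noG2 r s (gd_of_gg hrs)
          (tri_tail B (tri_tail B (tri_single B hst) htq) hqr)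
          (this.trans hlabs.symm) (by omega)
      have hngd_ru : ¬ B.gd r q := by
        intro hh
        exact noG2 r q hh (tri_single B hqr) (hlabr.trans hlu.symm) (by omega)
      have hru := gd_total B h (fun hh => hrnu ((hh : r = q) ▸ rfl)) hngd_ru
      have hngd_ts : ¬ B.gd t s := by
        intro hh
        exact noG2 t s hh (tri_single B hst) (hlabt.trans hlabs.symm) (by omega)
      have hts := gd_total B h (fun hh => by subst hh; omega) hngd_ts
      have hqs' := (gg_iff B h).mp hqs
      have hrs' := (gg_iff B h).mp hrs
      have hlt_tq : (B.ord h).lt t q := lo_lt_trans (B.ord h) hts.1 hqs'.1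
      have hlt'_qt : (B.ord (!h)).lt q t := by
        rcases (gd_iff B h).mp htq with hc | hc
        · exact absurd hc (fun hh => lo_lt_asymm (B.ord h) hlt_tq hh)
        · exact hc
      exact lo_lt_irrefl (B.ord (!h))
        (lo_lt_trans (B.ord (!h)) (lo_lt_trans (B.ord (!h))
          (lo_lt_trans (B.ord (!h)) hlt'_qt hts.2) hrs'.2) hru.2)
    · rw [hbo q hqu] at hbq
      by_cases hsu : s = u
      · -- Case 5
        subst hsu
        rw [hbu] at hbs
        have hau : a s = 1 := by omega
        have hlu : B.lab s = !h := by
          rcases hK with ⟨hau2, hlu2⟩ | ⟨hau2, hlu2⟩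
          · omega
          · exact hlu2
        have hlabr : B.lab r = h := by
          by_contra hca
          exact noG2 r s (gd_of_gg hrs)
            (tri_tail B (tri_tail B (tri_single B hst) htq) hqr)
            ((bool_eq_not hca).trans hlu.symm) (by omega)
        have hE2 : B.lab t = B.lab q → False := by
          intro hh
          exact noG2 t q htq
            (tri_tail B (tri_tail B (tri_single B hqr) (gd_of_gg hrs)) hst)
            hh (by omega)
        by_cases hlq : B.lab q = h
        · -- E3
          have hlabt : B.lab t = !h := by
            by_contra hca
            have : B.lab t = h := bool_not_eq_not hca
            exact hE2 (this.trans hlq.symm)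
          have hngd_tu : ¬ B.gd t s := by
            intro hh
            exact noG2 t s hh (tri_single B hst) (hlabt.trans hlu.symm) (by omega)
          have hut := gd_total B h (fun hh => by subst hh; omega) hngd_tu
          have hngd_rq : ¬ B.gd r q := by
            intro hh
            exact noG2 r q hh (tri_single B hqr) (hlabr.trans hlq.symm) (by omega)
          have hrq := gd_total B h (Ne.symm (gd_ne hqr)) hngd_rq
          have hrs' := (gg_iff B h).mp hrs
          have hlt_tq : (B.ord h).lt t q :=
            lo_lt_trans (B.ord h) (lo_lt_trans (B.ord h) hut.1 hrs'.1) hrq.1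
          have hlt'_qt : (B.ord (!h)).lt q t := by
            rcases (gd_iff B h).mp htq with hc | hc
            · exact absurd hc (fun hh => lo_lt_asymm (B.ord h) hlt_tq hh)
            · exact hc
          exact lo_lt_irrefl (B.ord (!h))
            (lo_lt_trans (B.ord (!h)) (lo_lt_trans (B.ord (!h))
              (lo_lt_trans (B.ord (!h)) hlt'_qt hut.2) hrs'.2) hrq.2)
        · -- E4
          have hlq' : B.lab q = !h := bool_eq_not hlq
          have hlabt : B.lab t = h := by
            by_contra hca
            exact hE2 ((bool_eq_not hca).trans hlq'.symm)
          have hqs' := (gg_iff B h).mp hqs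
          have hrs' := (gg_iff B h).mp hrs
          have hlt_rq : (B.ord h).lt r q := by
            rcases (gd_iff B h).mp hqr with hc | hc
            · exact hc
            · exact rule2 B h hlq' hc
          have hlt_tu : (B.ord h).lt t s := by
            rcases (gd_iff B h).mp hst with hc | hc
            · exact hc
            · exact rule2 B h hlu hc
          have hvh : ∀ v, (B.ord h).lt s v → (B.ord h).lt v r → B.lab v = h → a v = 0 := by
            intro v h1 h2 hlv
            by_contra hav
            exact noG2 r v ((gd_iff B h).mpr (Or.inl h2))
              (tri_tail B (tri_tail B (tri_tail B
                (tri_single B ((gd_iff B h).mpr (Or.inl h1))) hst) htq) hqr)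
              (hlabr.trans hlv.symm) (by omega)
          have hvh' : ∀ v, (B.ord h).lt s v → (B.ord h).lt v r → B.lab v = !h → a v ≠ 0 := by
            intro v h1 h2 hlv hav
            exact noG2 v s ((gd_iff B h).mpr (Or.inl h1))
              (tri_tail B (tri_tail B (tri_tail B (tri_single B hst) htq) hqr)
                ((gd_iff B h).mpr (Or.inl h2)))
              (hlv.trans hlu.symm) (by omega)
          have hsgr : sgn B h a r = 1 := sgn_mk1 B h a r (Or.inl ⟨hbr, hlabr⟩)
          obtain ⟨w, hw1, hw2, hsw⟩ := hdip r hrs'.1 hsgr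
          have hwdat : a w = 2 ∧ B.lab w = !h := by
            rcases sgn_classify B h a w (ha w) with hc | hc | hc | hc | hc | hc
            · omega
            · omega
            · exact absurd (hvh w hw1 hw2 hc.2.1) (by omega)
            · exact ⟨hc.1, hc.2.1⟩
            · omega
            · omega
          obtain ⟨haw, hlw⟩ := hwdat
          have hlt_wq : (B.ord h).lt w q := lo_lt_trans (B.ord h) hw2 hlt_rq
          have hlt'_wq : (B.ord (!h)).lt w q := by
            rcases lo_lt_total (B.ord (!h)) (lo_ne_of_lt (B.ord h) hlt_wq) with hc | hc
            · exact hc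
            · exact absurd (compat' B h hlt_wq hc).2 (by rw [hlw]; exact Ne.symm (bool_ne_not h))
          have hlt'_wr : (B.ord (!h)).lt w r := rule1 B h hlabr hw2
          exact noG3 q r w t hqr ((gg_iff B h).mpr ⟨hw2, hlt'_wr⟩)
            ((gd_iff B h).mpr (Or.inl (lo_lt_trans (B.ord h) hlt_tu hw1))) hrt htq
            ((gg_iff B h).mpr ⟨hlt_wq, hlt'_wq⟩) hbq haw hbr hbt
      · rw [hbo s hsu] at hbs
        exact noG3 q r s t hqr hrs hst hrt htq hqs hbq hbs hbr hbt



/-! ### duality -/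

def dualLO (l : LinearOrder S) : LinearOrder S := letI := l; inferInstanceAs (LinearOrder Sᵒᵈ)

def Biorder.dual (B : Biorder S) : Biorder S where
  li := dualLO B.li
  lj := dualLO B.lj
  lab := fun s => !B.lab s
  compat := by
    intro s t h1 h2
    have h1' : B.li.lt s t := h1
    have h2' : B.lj.lt t s := h2
    obtain ⟨ha1, ha2⟩ := B.compat t s h1' h2'
    constructor
    · show (!B.lab s) = false
      rw [ha2]
      rfl
    · show (!B.lab t) = true
      rw [ha1]
      rfl

lemma dual_ord_lt (B : Biorder S) (h : Bool) (x y : S) :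
    ((B.dual).ord h).lt x y ↔ (B.ord h).lt y x := by
  cases h <;> exact Iff.rfl

lemma dual_lab (B : Biorder S) (s : S) : B.dual.lab s = !B.lab s := rfl

lemma dual_gd (B : Biorder S) (s t : S) : B.dual.gd s t ↔ B.gd t s := Iff.rfl

lemma dual_gg (B : Biorder S) (s t : S) : B.dual.gg s t ↔ B.gg t s := Iff.rfl

lemma dual_tri (B : Biorder S) [Fintype S] (s t : S) :
    B.dual.triOn Finset.univ s t ↔ B.triOn Finset.univ t s := by
  constructor
  · intro hh
    have := (hh : Relation.TransGen (fun p q : S =>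
      p ∈ Finset.univ ∧ q ∈ Finset.univ ∧ B.dual.gd p q) s t).swap
    refine Relation.TransGen.mono ?_ _ _ this
    intro p q hr
    exact ⟨hr.2.1, hr.1, (dual_gd B q p).mp hr.2.2⟩
  · intro hh
    have := (hh : Relation.TransGen (fun p q : S =>
      p ∈ Finset.univ ∧ q ∈ Finset.univ ∧ B.gd p q) t s).swap
    refine Relation.TransGen.mono ?_ _ _ this
    intro p q hr
    exact ⟨hr.2.1, hr.1, (dual_gd B p q).mpr hr.2.2⟩

lemma sgn_dual (B : Biorder S) (h : Bool) (c : S → ℕ) (s : S) (hc : c s ≤ 2) :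
    sgn B.dual h (fun x => 2 - c x) s = - sgn B h c s := by
  have hv : c s = 0 ∨ c s = 1 ∨ c s = 2 := by omega
  have hl : B.dual.lab s = !B.lab s := rfl
  rcases hv with hv | hv | hv <;> cases hb : B.lab s <;> cases h <;>
    simp [sgn, hl, hv, hb]

lemma isGood_dual (B : Biorder S) [Fintype S] (c : S → ℕ) (hc : ∀ s, c s ≤ 2) :
    IsGoodOn B.dual Finset.univ (fun x => 2 - c x) ↔ IsGoodOn B Finset.univ c := by
  constructor
  · rintro ⟨d1, d2, d3⟩
    refine ⟨?_, ?_, ?_⟩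
    · rintro ⟨s, -, t, -, h1, h2, v1, v2⟩
      refine d1 ⟨t, Finset.mem_univ _, s, Finset.mem_univ _, h1, h2, ?_, ?_⟩
      · show 2 - c t = 1
        have := hc t; omega
      · show 2 - c s = 1
        have := hc s; omega
    · rintro ⟨s, -, t, -, h1, h2, h3, h4⟩
      refine d2 ⟨t, Finset.mem_univ _, s, Finset.mem_univ _, (dual_gd B t s).mpr h1,
        (dual_tri B s t).mpr h2, ?_, ?_⟩
      · rw [dual_lab, dual_lab, h3]
      · show 2 - c t < 2 - c s
        have := hc s; have := hc t; omega
    · rintro ⟨q, -, r, -, s, -, t, -, h1, h2, h3, h4, h5, h6, v1, v2, v3, v4⟩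
      refine d3 ⟨t, Finset.mem_univ _, s, Finset.mem_univ _, r, Finset.mem_univ _,
        q, Finset.mem_univ _, (dual_gd B t s).mpr h3, (dual_gg B s r).mpr h2,
        (dual_gd B r q).mpr h1, (dual_gg B s q).mpr h6, (dual_gd B q t).mpr h5,
        (dual_gg B t r).mpr h4, ?_, ?_, ?_, ?_⟩
      · show 2 - c t = 2
        have := hc t; omega
      · show 2 - c r = 2
        have := hc r; omega
      · show 2 - c s = 0
        have := hc s; omega
      · show 2 - c q = 0
        have := hc q; omega
  · rintro ⟨d1, d2, d3⟩
    refine ⟨?_, ?_, ?_⟩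
    · rintro ⟨s, -, t, -, h1, h2, v1, v2⟩
      have v1' : 2 - c s = 1 := v1
      have v2' : 2 - c t = 1 := v2
      have h1' : B.lti s t := h1
      have h2' : B.ltj t s := h2
      refine d1 ⟨t, Finset.mem_univ _, s, Finset.mem_univ _, h1', h2', ?_, ?_⟩
      · have := hc t; omega
      · have := hc s; omega
    · rintro ⟨s, -, t, -, h1, h2, h3, h4⟩
      have h4' : 2 - c s < 2 - c t := h4
      refine d2 ⟨t, Finset.mem_univ _, s, Finset.mem_univ _, (dual_gd B s t).mp h1,
        (dual_tri B t s).mp h2, ?_, ?_⟩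
      · rw [dual_lab, dual_lab] at h3
        cases hb1 : B.lab s <;> cases hb2 : B.lab t <;> simp_all
      · have := hc s; have := hc t; omega
    · rintro ⟨q, -, r, -, s, -, t, -, h1, h2, h3, h4, h5, h6, v1, v2, v3, v4⟩
      have v1' : 2 - c q = 2 := v1
      have v2' : 2 - c s = 2 := v2
      have v3' : 2 - c r = 0 := v3
      have v4' : 2 - c t = 0 := v4
      refine d3 ⟨t, Finset.mem_univ _, s, Finset.mem_univ _, r, Finset.mem_univ _,
        q, Finset.mem_univ _, (dual_gd B s t).mp h3, (dual_gg B r s).mp h2,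
        (dual_gd B q r).mp h1, (dual_gg B q s).mp h6, (dual_gd B t q).mp h5,
        (dual_gg B r t).mp h4, ?_, ?_, ?_, ?_⟩
      · have := hc t; omega
      · have := hc r; omega
      · have := hc s; omega
      · have := hc q; omega

lemma sgn_congr (B : Biorder S) (h : Bool) (c c' : S → ℕ) (s : S) (he : c s = c' s) :
    sgn B h c s = sgn B h c' s := by
  unfold sgn
  rw [he]


/-- Proposition 4.6 of the paper: if `f̃_h a = b`, then `a` is a good configuration
if and only if `b` is. -/
theorem good_preserved_by_crystal_operators (S : Type) [Fintype S] (B : Biorder S)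
    (h : Bool) (a b : S → ℕ) (ha : ∀ s, a s ≤ 2) (hb : ∀ s, b s ≤ 2)
    (hf : ft B h Finset.univ a = some b) :
    IsGoodOn B Finset.univ a ↔ IsGoodOn B Finset.univ b := by
  rw [ft] at hf
  obtain ⟨u, hcu, hbdef⟩ := Option.map_eq_some_iff.mp hf
  obtain ⟨h0, hdipF, hdipB⟩ := cogood_facts B h a u hcu
  have hau1 : a u ≤ 1 := by
    rcases sgn_classify B h a u (ha u) with hc | hc | hc | hc | hc | hc <;> omega
  have hb_u : b u = a u + 1 := by rw [← hbdef]; exact Function.update_self u _ a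
  have hb_o : ∀ x, x ≠ u → b x = a x := by
    intro x hx
    rw [← hbdef]
    exact Function.update_of_ne hx _ a
  have hKu : (a u = 0 ∧ B.lab u = h) ∨ (a u = 1 ∧ B.lab u = !h) := by
    rcases sgn_classify B h a u (ha u) with hc | hc | hc | hc | hc | hc
    · exact Or.inl ⟨hc.1, hc.2.1⟩
    · exact Or.inr ⟨hc.1, hc.2.1⟩
    all_goals (exfalso; omega)
  constructor
  · intro hga
    rw [← hbdef]
    exact main_lemma B h a u ha h0 hdipF hga
  · intro hgb
    have hA2 : ∀ s : S, (fun x => 2 - b x) s ≤ 2 := by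
      intro s2
      show 2 - b s2 ≤ 2
      omega
    have hsbu : sgn B h b u = -1 := by
      unfold sgn
      rcases hKu with ⟨ha0, hl0⟩ | ⟨ha0, hl0⟩
      · have hbu1 : b u = 1 := by omega
        rw [if_neg, if_pos]
        · exact Or.inl ⟨hbu1, hl0⟩
        · rintro (⟨hc, -⟩ | ⟨-, hc⟩)
          · omega
          · exact hc hl0
      · have hbu2 : b u = 2 := by omega
        have hl0' : B.lab u ≠ h := by
          rw [hl0]
          exact Ne.symm (bool_ne_not h)
        rw [if_neg, if_pos]
        · exact Or.inr ⟨hbu2, hl0'⟩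
        · rintro (⟨hc, -⟩ | ⟨hc, -⟩) <;> omega
    have h0D : sgn B.dual h (fun x => 2 - b x) u = 1 := by
      rw [sgn_dual B h b u (hb u), hsbu]
      rfl
    have hdipD : ∀ y, (B.dual.ord h).lt u y → sgn B.dual h (fun x => 2 - b x) y = 1 →
        ∃ w, (B.dual.ord h).lt u w ∧ (B.dual.ord h).lt w y ∧
          sgn B.dual h (fun x => 2 - b x) w = -1 := by
      intro y hy hsy
      rw [dual_ord_lt] at hy
      have hyu : y ≠ u := lo_ne_of_lt (B.ord h) hy
      rw [sgn_dual B h b y (hb y)] at hsy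
      have hsy' : sgn B h a y = -1 := by
        rw [← sgn_congr B h b a y (hb_o y hyu)]
        omega
      obtain ⟨w, hw1, hw2, hw3⟩ := hdipB y hy hsy'
      have hwu : w ≠ u := lo_ne_of_lt (B.ord h) hw2
      refine ⟨w, ?_, ?_, ?_⟩
      · rw [dual_ord_lt]
        exact hw2
      · rw [dual_ord_lt]
        exact hw1
      · rw [sgn_dual B h b w (hb w), sgn_congr B h b a w (hb_o w hwu), hw3]
    have hgD : IsGoodOn B.dual Finset.univ (fun x => 2 - b x) := (isGood_dual B b hb).mpr hgb
    have hres := main_lemma B.dual h (fun x => 2 - b x) u hA2 h0D hdipD hgD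
    have hupd : Function.update (fun x => 2 - b x) u ((fun x => 2 - b x) u + 1) =
        fun x => 2 - a x := by
      funext x
      by_cases hx : x = u
      · subst hx
        rw [Function.update_self]
        show 2 - b x + 1 = 2 - a x
        omega
      · rw [Function.update_of_ne hx]
        show 2 - b x = 2 - a x
        rw [hb_o x hx]
    rw [hupd] at hres
    exact (isGood_dual B a ha).mp hres

end BiorderCrystal
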